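/- Let m ≥ 2 be an integer with m ≢ 1 mod 3 and set λ = 2/m. Then for all sufficiently large primes p ∈ D_λ, f_λ(p)/p ≥ m + 2 − 2/p, i.e., f_λ(p) ≥ (m+2)p − 2. -/

import Mathlib

/-- The set of natural numbers generated by `A` under addition (containing `0`). -/
def NSgen (A : Set ℕ) : Set ℕ := (AddSubmonoid.closure A : Set ℕ)

/-- `S` is a numerical semigroup: additively closed, contains `0`,
has finite complement in `ℕ`, and `S ≠ ℕ`. -/
def IsNumSgrp (S : Set ℕ) : Prop :=
  0 ∈ S ∧ (∀ a ∈ S, ∀ b ∈ S, a + b ∈ S) ∧ Sᶜ.Finite ∧ S ≠ Set.univ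

/-- The Frobenius number: the largest natural number not in `S`. -/
noncomputable def NSfrob (S : Set ℕ) : ℕ := sSup Sᶜ

/-- The genus: the number of gaps of `S`. -/
noncomputable def NSgenus (S : Set ℕ) : ℕ := Sᶜ.ncard

/-- The multiplicity: the least positive element of `S`. -/
noncomputable def NSmult (S : Set ℕ) : ℕ := sInf {n | n ∈ S ∧ n ≠ 0}

/-- The atoms (minimal generators) of `S`: the set `S* \ (S* + S*)` where `S* = S \ {0}`. -/
def NSatoms (S : Set ℕ) : Set ℕ :=
  {n | n ∈ S ∧ n ≠ 0 ∧ ¬ ∃ a, a ∈ S ∧ a ≠ 0 ∧ ∃ b, b ∈ S ∧ b ≠ 0 ∧ n = a + b}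

/-- The embedding dimension: the number of atoms of `S`. -/
noncomputable def NSembdim (S : Set ℕ) : ℕ := (NSatoms S).ncard

/-- The primes in the interval `I_lam(p) = [p, p + lam*p]`. -/
def primesIn (lam : ℝ) (p : ℕ) : Set ℕ :=
  {q | q.Prime ∧ p ≤ q ∧ (q : ℝ) ≤ p + lam * p}

/-- `S_lam(p)`: the numerical semigroup generated by the primes in `[p, p + lam*p]`. -/
def Slam (lam : ℝ) (p : ℕ) : Set ℕ := NSgen (primesIn lam p)

/-- `D_lam`: the primes `p` such that `[p, p + lam*p]` contains at least two primes. -/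
def Dlam (lam : ℝ) : Set ℕ :=
  {p | p.Prime ∧ ∃ q ∈ primesIn lam p, ∃ r ∈ primesIn lam p, q ≠ r}

/-- `f_lam(p)`: the Frobenius number of `S_lam(p)`. -/
noncomputable def flam (lam : ℝ) (p : ℕ) : ℕ := NSfrob (Slam lam p)

/-- `p_n`, the `n`-th prime in natural order (`nthPrime 1 = 2`). -/
noncomputable def nthPrime (n : ℕ) : ℕ := Nat.nth Nat.Prime (n - 1)

/-- `S_n`: the numerical semigroup generated by all primes `≥ p_n`. -/
noncomputable def Sn (n : ℕ) : Set ℕ := NSgen {q | q.Prime ∧ nthPrime n ≤ q}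

/-- `f_n`: the Frobenius number of `S_n`. -/
noncomputable def fn (n : ℕ) : ℕ := NSfrob (Sn n)

/-- `S(p)`: the numerical semigroup generated by the primes in `[p, 2p]`. -/
def Sp (p : ℕ) : Set ℕ := NSgen {q | q.Prime ∧ p ≤ q ∧ q ≤ 2 * p}

/-- Statement `A(m)`: large `N` of the same parity as `m` are sums of `m` almost equal primes. -/
def Astmt (m : ℕ) : Prop :=
  ∀ δ : ℝ, 0 < δ → ∃ N₀ : ℕ, 0 < N₀ ∧ ∀ N : ℕ, N₀ ≤ N → N % 2 = m % 2 →
    ∃ q : Fin m → ℕ, (∀ i, (q i).Prime) ∧ (∑ i, q i) = N ∧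
      ∀ i, |(N : ℝ) / m - q i| < δ * N

/-- `T(m)`: positive integers `t` such that `1+tm`, `3+tm` and `1+t(m+2)` are all prime. -/
def Tset (m : ℕ) : Set ℕ :=
  {t | 0 < t ∧ (1 + t * m).Prime ∧ (3 + t * m).Prime ∧ (1 + t * (m + 2)).Prime}

lemma msum_mod2 (l : Multiset ℕ) : (∀ q ∈ l, q % 2 = 1) → l.sum % 2 = l.card % 2 := by
  induction l using Multiset.induction_on with
  | empty => simp
  | cons a s ih =>
    intro h
    have ha := h a (Multiset.mem_cons_self a s)
    have hs := ih (fun q hq => h q (Multiset.mem_cons_of_mem hq))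
    simp only [Multiset.sum_cons, Multiset.card_cons]
    omega

lemma msum_lb (c : ℕ) (l : Multiset ℕ) : (∀ q ∈ l, c ≤ q) → l.card * c ≤ l.sum := by
  induction l using Multiset.induction_on with
  | empty => simp
  | cons a s ih =>
    intro h
    have ha := h a (Multiset.mem_cons_self a s)
    have hs := ih (fun q hq => h q (Multiset.mem_cons_of_mem hq))
    simp only [Multiset.sum_cons, Multiset.card_cons]
    calc (s.card + 1) * c = c + s.card * c := by ring
    _ ≤ a + s.sum := Nat.add_le_add ha hs

lemma msum_mul_ub (m c : ℕ) (l : Multiset ℕ) :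
    (∀ q ∈ l, m * q ≤ c) → m * l.sum ≤ l.card * c := by
  induction l using Multiset.induction_on with
  | empty => simp
  | cons a s ih =>
    intro h
    have ha := h a (Multiset.mem_cons_self a s)
    have hs := ih (fun q hq => h q (Multiset.mem_cons_of_mem hq))
    simp only [Multiset.sum_cons, Multiset.card_cons]
    calc m * (a + s.sum) = m * a + m * s.sum := by ring
    _ ≤ c + s.card * c := Nat.add_le_add ha hs
    _ = (s.card + 1) * c := by ring

lemma msum_const (a : ℕ) (l : Multiset ℕ) : (∀ q ∈ l, q = a) → l.sum = l.card * a := by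
  induction l using Multiset.induction_on with
  | empty => simp
  | cons b s ih =>
    intro h
    have hb := h b (Multiset.mem_cons_self b s)
    have hs := ih (fun q hq => h q (Multiset.mem_cons_of_mem hq))
    simp only [Multiset.sum_cons, Multiset.card_cons]
    rw [hb, hs]; ring

lemma elt_facts {m p q : ℕ} (hm : 2 ≤ m) (hP : 2*m + 4 ≤ p)
    (hq : q ∈ primesIn (2/(m:ℝ)) p) :
    q.Prime ∧ p ≤ q ∧ m*q ≤ (m+2)*p ∧ q % 2 = 1 ∧ q % 3 ≠ 0 := by
  obtain ⟨hqp, hpq, hqle⟩ := hq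
  have hm0 : (0:ℝ) < m := by
    have : (0:ℕ) < m := by omega
    exact_mod_cast this
  have hbound : m * q ≤ (m+2) * p := by
    have h2 : (m:ℝ) * q ≤ (m+2) * p := by
      calc (m:ℝ) * q ≤ m * (p + 2/m * p) := by
            exact mul_le_mul_of_nonneg_left hqle hm0.le
      _ = (m+2) * p := by field_simp
    exact_mod_cast h2
  have hodd : q % 2 = 1 := by
    rcases hqp.eq_two_or_odd with h | h
    · omega
    · exact h
  have h3 : q % 3 ≠ 0 := by
    intro h0
    have : (3:ℕ) ∣ q := Nat.dvd_of_mod_eq_zero h0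
    rcases (hqp.eq_one_or_self_of_dvd 3 this) with h | h <;> omega
  exact ⟨hqp, hpq, hbound, hodd, h3⟩

lemma msum_ub (c : ℕ) (l : Multiset ℕ) : (∀ q ∈ l, q ≤ c) → l.sum ≤ l.card * c := by
  induction l using Multiset.induction_on with
  | empty => simp
  | cons a s ih =>
    intro h
    have ha := h a (Multiset.mem_cons_self a s)
    have hs := ih (fun q hq => h q (Multiset.mem_cons_of_mem hq))
    simp only [Multiset.sum_cons, Multiset.card_cons]
    calc a + s.sum ≤ c + s.card * c := Nat.add_le_add ha hs
    _ = (s.card + 1) * c := by ring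

set_option maxHeartbeats 1000000 in
lemma not_both {m p : ℕ} (hm : 2 ≤ m) (h3 : m % 3 ≠ 1) (hp : p.Prime) (hP : 2*m + 4 ≤ p)
    (hN : (m+2)*p - 2 ∈ Slam (2/(m:ℝ)) p) (hN4 : (m+2)*p + 2 ∈ Slam (2/(m:ℝ)) p) : False := by
  obtain ⟨E, hE⟩ : ∃ x, (m+2)*p = x := ⟨_, rfl⟩
  have hpE : p ≤ E := by rw [← hE]; exact Nat.le_mul_of_pos_left p (by omega)
  have hp2 : p % 2 = 1 := (hp.eq_two_or_odd).resolve_left (by clear * - hP; omega)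
  have hE2 : E % 2 = m % 2 := by
    rw [← hE, Nat.mul_mod, hp2, mul_one]
    clear * -; omega
  have hp3ne : p % 3 ≠ 0 := by
    intro h
    rcases hp.eq_one_or_self_of_dvd 3 (Nat.dvd_of_mod_eq_zero h) with h' | h' <;>
      (clear * - h' hP; omega)
  -- == Analysis of (m+2)p + 2 : produces p % 3 = 2
  obtain ⟨l4, hl4mem, hl4sum⟩ := AddSubmonoid.exists_multiset_of_mem_closure hN4
  rw [hE] at hl4sum
  have hf4 : ∀ q ∈ l4, q.Prime ∧ p ≤ q ∧ m*q ≤ (m+2)*p ∧ q % 2 = 1 ∧ q % 3 ≠ 0 :=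
    fun q hq => elt_facts hm hP (hl4mem q hq)
  have hlb4 : l4.card * p ≤ E + 2 := by
    have h1 := msum_lb p l4 (fun q hq => (hf4 q hq).2.1)
    rwa [hl4sum] at h1
  have hub4 : m * (E + 2) ≤ l4.card * E := by
    have h1 := msum_mul_ub m ((m+2)*p) l4 (fun q hq => (hf4 q hq).2.2.1)
    rwa [hl4sum, hE] at h1
  have hpar4 : (E + 2) % 2 = l4.card % 2 := by
    have h1 := msum_mod2 l4 (fun q hq => (hf4 q hq).2.2.2.1)
    rwa [hl4sum] at h1
  have hk4lt : l4.card < m + 3 := by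
    refine lt_of_mul_lt_mul_right ?_ (Nat.zero_le p)
    have h2 : (m+3)*p = E + p := by rw [← hE]; ring
    rw [h2]
    linarith only [hlb4, hP]
  have hk4 : l4.card = m + 2 := by
    by_contra hne
    have hle : l4.card ≤ m := by clear * - hk4lt hne hpar4 hE2; omega
    have h5 : l4.card * E ≤ m * E := mul_le_mul_left hle E
    have h6 : m * (E+2) = m*E + 2*m := by ring
    linarith only [hub4, h5, h6, hm]
  have hexq : ∃ q₀ ∈ l4, q₀ ≠ p := by
    by_contra hall
    push_neg at hall
    have h7 := msum_const p l4 hall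
    rw [hl4sum, hk4, hE] at h7
    clear * - h7; omega
  obtain ⟨q₀, hq₀l, hq₀ne⟩ := hexq
  obtain ⟨t, ht⟩ := Multiset.exists_cons_of_mem hq₀l
  have htc : t.card + 1 = m + 2 := by rw [← hk4, ht, Multiset.card_cons]
  have htlb : t.card * p ≤ t.sum :=
    msum_lb p t (fun q hq => (hf4 q (ht ▸ Multiset.mem_cons_of_mem hq)).2.1)
  have hts : q₀ + t.sum = E + 2 := by rw [← hl4sum, ht, Multiset.sum_cons]
  have hsplit : (m+1) * p + p = E := by rw [← hE]; ring
  have htc' : t.card = m + 1 := by clear * - htc; omega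
  rw [htc'] at htlb
  have hq₀le : q₀ ≤ p + 2 := by linarith only [hts, htlb, hsplit]
  have hfq₀ := hf4 q₀ hq₀l
  have hq₀p : p ≤ q₀ := hfq₀.2.1
  have hq₀odd : q₀ % 2 = 1 := hfq₀.2.2.2.1
  have hq₀eq : q₀ = p + 2 := by clear * - hq₀p hq₀odd hq₀ne hq₀le hp2; omega
  have hp23ne : (p+2) % 3 ≠ 0 := hq₀eq ▸ hfq₀.2.2.2.2
  have hp3 : p % 3 = 2 := by clear * - hp3ne hp23ne; omega
  clear hlb4 hub4 hpar4 hk4lt hk4 htc htlb hts hsplit htc' hq₀le hfq₀ hq₀p hq₀odd hq₀eq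
    hq₀ne hp23ne hf4 hl4sum hl4mem ht hN4
  -- == Analysis of (m+2)p - 2
  obtain ⟨l, hlmem, hlsum⟩ := AddSubmonoid.exists_multiset_of_mem_closure hN
  clear hN
  have hsum2 : l.sum + 2 = E := by rw [hlsum, hE]; clear * - hpE hP; omega
  have hf : ∀ q ∈ l, q.Prime ∧ p ≤ q ∧ m*q ≤ (m+2)*p ∧ q % 2 = 1 ∧ q % 3 ≠ 0 :=
    fun q hq => elt_facts hm hP (hlmem q hq)
  have hlb : l.card * p ≤ l.sum := msum_lb p l (fun q hq => (hf q hq).2.1)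
  have hub : m * l.sum ≤ l.card * E := by
    have h1 := msum_mul_ub m ((m+2)*p) l (fun q hq => (hf q hq).2.2.1)
    rwa [hE] at h1
  have hpar : l.sum % 2 = l.card % 2 := msum_mod2 l (fun q hq => (hf q hq).2.2.2.1)
  have hclt : l.card < m + 2 := by
    refine lt_of_mul_lt_mul_right ?_ (Nat.zero_le p)
    have h2 : (m+2)*p = E := hE
    linarith only [hlb, hsum2, h2, hpE, hP]
  have hcpar : l.card % 2 = m % 2 := by clear * - hpar hsum2 hE2; omega
  have hck : l.card = m := by
    by_contra hne
    have hle : l.card ≤ m - 2 := by clear * - hclt hcpar hne hm; omega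
    have h5 : l.card * E ≤ (m-2) * E := mul_le_mul_left hle E
    have h6 : (m-2) * E + 2 * E = m * E := by
      have h : m - 2 + 2 = m := by clear * - hm; omega
      calc (m-2)*E + 2*E = (m-2+2)*E := by ring
      _ = m*E := by rw [h]
    have h7 : m * l.sum + 2 * m = m * E := by
      calc m * l.sum + 2*m = m * (l.sum + 2) := by ring
      _ = m * E := by rw [hsum2]
    linarith only [hub, h5, h6, h7, hpE, hP]
  have hkey : ∀ q₁ ∈ l, E ≤ m * q₁ + 2 * m := by
    intro q₁ hq₁
    obtain ⟨s, hs⟩ := Multiset.exists_cons_of_mem hq₁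
    have hsc : s.card + 1 = m := by rw [← hck, hs, Multiset.card_cons]
    have hsub : m * s.sum ≤ s.card * E := by
      have h1 := msum_mul_ub m ((m+2)*p) s
        (fun q hq => (hf q (hs ▸ Multiset.mem_cons_of_mem hq)).2.2.1)
      rwa [hE] at h1
    have hss : q₁ + s.sum = l.sum := by rw [hs, Multiset.sum_cons]
    have h8 : s.card * E + E = m * E := by
      calc s.card * E + E = (s.card + 1) * E := by ring
      _ = m * E := by rw [hsc]
    have h7 : m * l.sum + 2 * m = m * E := by
      calc m * l.sum + 2*m = m * (l.sum + 2) := by ring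
      _ = m * E := by rw [hsum2]
    have h9 : m * q₁ + m * s.sum = m * l.sum := by rw [← hss]; ring
    linarith only [hsub, h8, h7, h9]
  by_cases hall : ∀ q ∈ l, ∀ q' ∈ l, q = q'
  · -- all summands equal: m*a + 2 = (m+2)p, contradiction mod 3
    have hl0 : l ≠ 0 := by
      intro h0
      rw [h0] at hck
      simp at hck
      clear * - hck hm; omega
    obtain ⟨a, ha⟩ := Multiset.exists_mem_of_ne_zero hl0
    have hconst := msum_const a l (fun q hq => hall q hq a ha)
    rw [hck] at hconst
    have heq' : m * a + 2 = (m+2)*p := by rw [← hconst, hE]; exact hsum2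
    have hfa := hf a ha
    have ha3 : a % 3 = 1 ∨ a % 3 = 2 := by
      have h' := hfa.2.2.2.2; clear * - h'; omega
    have hm3 : m % 3 = 0 ∨ m % 3 = 2 := by clear * - h3; omega
    have e1 : (m * a + 2) % 3 = ((m+2) * p) % 3 := by rw [heq']
    rw [Nat.add_mod (m*a) 2 3, Nat.mul_mod m a 3, Nat.mul_mod (m+2) p 3,
        Nat.add_mod m 2 3, hp3] at e1
    clear * - e1 hm3 ha3
    rcases hm3 with h | h <;> rcases ha3 with h' | h' <;> rw [h, h'] at e1 <;> omega
  · -- two distinct summands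
    push_neg at hall
    obtain ⟨x, hx, y, hy, hxy⟩ := hall
    obtain ⟨u, v, hu, hv, huv⟩ : ∃ u v, u ∈ l ∧ v ∈ l ∧ u < v := by
      rcases Nat.lt_or_ge x y with h | h
      · exact ⟨x, y, hx, hy, h⟩
      · exact ⟨y, x, hy, hx, lt_of_le_of_ne h (Ne.symm hxy)⟩
    have hfu := hf u hu
    have hfv := hf v hv
    have hmpos : 0 < m := by clear * - hm; omega
    have hmv : m * v ≤ E := by have h1 := hfv.2.2.1; rwa [hE] at h1
    have hkeyu := hkey u hu
    have hmu2 : m * (u+2) = m*u + 2*m := by ring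
    have hvle : v ≤ u + 2 := by
      have h4 : m * v ≤ m * (u + 2) := by linarith only [hmv, hkeyu, hmu2]
      exact Nat.le_of_mul_le_mul_left h4 hmpos
    have hveq : v = u + 2 := by
      have h1 := hfu.2.2.2.1
      have h2 := hfv.2.2.2.1
      clear * - h1 h2 huv hvle; omega
    have hallle : ∀ q ∈ l, q ≤ u + 2 := by
      intro q hq
      have h1 : m*q ≤ E := by have h2 := (hf q hq).2.2.1; rwa [hE] at h2
      have h4 : m * q ≤ m * (u + 2) := by linarith only [h1, hkeyu, hmu2]
      exact Nat.le_of_mul_le_mul_left h4 hmpos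
    obtain ⟨t2, ht2⟩ := Multiset.exists_cons_of_mem hu
    have ht2c : t2.card + 1 = m := by rw [← hck, ht2, Multiset.card_cons]
    have ht2ub : t2.sum ≤ t2.card * (u + 2) :=
      msum_ub (u+2) t2 (fun q hq => hallle q (ht2 ▸ Multiset.mem_cons_of_mem hq))
    have ht2s : u + t2.sum = l.sum := by rw [ht2, Multiset.sum_cons]
    have h10 : t2.card * (u+2) + (u+2) = m * (u+2) := by
      calc t2.card * (u+2) + (u+2) = (t2.card + 1) * (u+2) := by ring
      _ = m * (u+2) := by rw [ht2c]
    have h11 : m * (u+2) ≤ E := by rw [← hveq]; exact hmv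
    have h12 : E ≤ m * (u+2) := by linarith only [hsum2, ht2s, ht2ub, h10]
    have hEeq : E = m * (u + 2) := le_antisymm h12 h11
    obtain ⟨d, hd⟩ : ∃ d, u + 2 = p + d :=
      ⟨u + 2 - p, by have h' := hfu.2.1; clear * - h'; omega⟩
    have h13 : m * p + m * d = m * p + 2 * p := by
      calc m*p + m*d = m*(p+d) := by ring
      _ = m*(u+2) := by rw [hd]
      _ = E := hEeq.symm
      _ = (m+2)*p := hE ▸ rfl
      _ = m*p + 2*p := by ring
    have h14 : m * d = 2 * p := Nat.add_left_cancel h13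
    have hdvd : m ∣ 2 * p := ⟨d, h14.symm⟩
    have hcop : Nat.Coprime m p := by
      have hnd : ¬ p ∣ m := by
        intro hdv
        have h' := Nat.le_of_dvd hmpos hdv
        clear * - h' hP; omega
      exact ((Nat.Prime.coprime_iff_not_dvd hp).mpr hnd).symm
    have hm2' : m ∣ 2 := hcop.dvd_of_dvd_mul_right hdvd
    have hm2 : m = 2 := le_antisymm (Nat.le_of_dvd (by norm_num) hm2') hm
    rw [hm2] at h14
    have hdp : d = p := by clear * - h14; omega
    have hv2p : v = 2 * p := by clear * - hveq hd hdp; omega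
    have hvodd := hfv.2.2.2.1
    clear * - hv2p hvodd hP
    omega

theorem statement11 (m : ℕ) (hm : 2 ≤ m) (h3 : m % 3 ≠ 1) :
    ∃ P : ℕ, ∀ p ∈ Dlam (2 / (m : ℝ)), P ≤ p →
      (m : ℝ) + 2 - 2 / p ≤ (flam (2 / (m : ℝ)) p : ℝ) / p := by
  refine ⟨2*m + 4, ?_⟩
  intro p hpD hP
  obtain ⟨hp, q, hq, r, hr, hqr⟩ := hpD
  have hsub : ({q, r} : Set ℕ) ⊆ primesIn (2/(m:ℝ)) p := by
    intro x hx
    rcases hx with h | h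
    · exact h ▸ hq
    · rw [Set.mem_singleton_iff] at h; exact h ▸ hr
  have hcop : Nat.Coprime q r := (Nat.coprime_primes hq.1 hr.1).mpr hqr
  have hfro := frobeniusNumber_pair hcop hq.1.one_lt hr.1.one_lt
  have hBdd : BddAbove (Slam (2/(m:ℝ)) p)ᶜ := by
    refine ⟨q*r - q - r, fun x hx => hfro.2 ?_⟩
    intro hxc
    exact hx (AddSubmonoid.closure_mono hsub hxc)
  have hkey : ∃ g, g ∉ Slam (2/(m:ℝ)) p ∧ (m+2)*p - 2 ≤ g := by
    by_cases hN : (m+2)*p - 2 ∈ Slam (2/(m:ℝ)) p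
    · exact ⟨(m+2)*p + 2, fun h4 => not_both hm h3 hp hP hN h4,
        le_trans (Nat.sub_le _ 2) (Nat.le_add_right _ 2)⟩
    · exact ⟨_, hN, le_rfl⟩
  obtain ⟨g, hgS, hgle⟩ := hkey
  have hfg : (m+2)*p - 2 ≤ flam (2/(m:ℝ)) p := le_trans hgle (le_csSup hBdd hgS)
  have hp0 : (0:ℝ) < p := by exact_mod_cast hp.pos
  have h2le : 2 ≤ (m+2)*p := by
    have h1 : m+2 ≤ (m+2)*p := Nat.le_mul_of_pos_right (m+2) hp.pos
    exact le_trans (by omega) h1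
  have hcast : ((m:ℝ)+2) * p - 2 ≤ (flam (2/(m:ℝ)) p : ℝ) := by
    have h1 : (((m+2)*p - 2 : ℕ) : ℝ) ≤ (flam (2/(m:ℝ)) p : ℝ) := by exact_mod_cast hfg
    rw [Nat.cast_sub h2le] at h1
    push_cast at h1
    linarith only [h1]
  have e : ((m:ℝ)+2) - 2/p = (((m:ℝ)+2)*p - 2)/p := by field_simp
  rw [e]
  exact div_le_div_of_nonneg_right hcast hp0.le
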